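/- For every integer u ≥ 1, the sum ∑_{m=1}^{u} (2u+1)!/(16^{u-1} · (u!)^2) · (2m-2)! · (2m-1)! · m! · (2u-2m)! / ((2m+1)! · ((m-1)!)^3 · ((u-m)!)^2) equals 1. -/

import Mathlib

open Finset Nat

private def BB (j : ℕ) : ℚ := ((2*j).factorial : ℚ) / ((j.factorial : ℚ))^2
private def CC (j : ℕ) : ℚ := ((2*j).factorial : ℚ) / ((j.factorial : ℚ) * ((j+1).factorial : ℚ))
private def AA (k : ℕ) : ℚ := BB k / (2*(2*(k:ℚ)+3))
private def DD (n : ℕ) : ℚ := 16^n * (((n+1).factorial : ℚ))^2 / (((2*n+3).factorial : ℚ))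
private def RH (n : ℕ) : ℚ := 8*((n:ℚ)+2)/(2*(n:ℚ)+5)
private def HH (n k : ℕ) : ℚ :=
  (k:ℚ)*(4*((k:ℚ)+1)*((k:ℚ)-(n:ℚ))-2*(n:ℚ)-3)/(4*((n:ℚ)+1)*((n:ℚ)+2)) * AA k * CC (n-k)

private lemma factQpos (n : ℕ) : (0:ℚ) < (n.factorial : ℚ) := by
  exact_mod_cast n.factorial_pos

private lemma B0 : BB 0 = 1 := by simp [BB]
private lemma B1 : BB 1 = 2 := by norm_num [BB, Nat.factorial]
private lemma C0 : CC 0 = 1 := by simp [CC]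

private lemma Bsucc (j : ℕ) : BB (j+1) = 2*(2*(j:ℚ)+1)/((j:ℚ)+1) * BB j := by
  have h1 := factQpos j
  have h2 := factQpos (2*j)
  unfold BB
  rw [show 2*(j+1) = (2*j+1)+1 by ring]
  simp only [Nat.factorial_succ]
  push_cast
  field_simp
  ring

private lemma Csucc (j : ℕ) : CC (j+1) = 2*(2*(j:ℚ)+1)/((j:ℚ)+2) * CC j := by
  have h1 := factQpos j
  have h2 := factQpos (2*j)
  have h3 := factQpos (j+1)
  unfold CC
  rw [show 2*(j+1) = (2*j+1)+1 by ring, show j+1+1 = (j+1)+1 from rfl]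
  simp only [Nat.factorial_succ]
  push_cast
  field_simp
  ring

private lemma BCat (j : ℕ) : BB j = ((j:ℚ)+1) * CC j := by
  have h1 := factQpos j
  unfold BB CC
  simp only [Nat.factorial_succ]
  push_cast
  field_simp

private lemma Asucc (k : ℕ) :
    AA (k+1) = 2*(2*(k:ℚ)+1)*(2*(k:ℚ)+3)/(((k:ℚ)+1)*(2*(k:ℚ)+5)) * AA k := by
  unfold AA
  rw [Bsucc]
  have h1 : ((k:ℚ)+1) ≠ 0 := by positivity
  have h2 : (2*(k:ℚ)+3) ≠ 0 := by positivity
  have h3 : (2*(k:ℚ)+5) ≠ 0 := by positivity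
  push_cast
  field_simp
  ring

private lemma Dsucc (n : ℕ) : DD (n+1) = RH n * DD n := by
  have h1 := factQpos (2*n+3)
  have h2 := factQpos (n+1)
  unfold DD RH
  rw [show 2*(n+1)+3 = ((2*n+3)+1)+1 by ring, show n+1+1 = (n+1)+1 from rfl]
  simp only [Nat.factorial_succ]
  push_cast
  field_simp
  ring

private lemma Bpos (j : ℕ) : 0 < BB j := by
  unfold BB
  have h1 := factQpos j
  have h2 := factQpos (2*j)
  positivity

private lemma Dpos (n : ℕ) : 0 < DD n := by
  unfold DD
  have h1 := factQpos (2*n+3)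
  have h2 := factQpos (n+1)
  positivity

private lemma hzero (n : ℕ) : HH n 0 = 0 := by simp [HH]

private lemma boundary (n : ℕ) : RH n * HH n n + AA n * (2 - RH n) + AA (n+1) = 0 := by
  unfold HH RH
  rw [Nat.sub_self, C0, Asucc]
  have h1 : ((n:ℚ)+1) ≠ 0 := by positivity
  have h2 : ((n:ℚ)+2) ≠ 0 := by positivity
  have h3 : (2*(n:ℚ)+5) ≠ 0 := by positivity
  have h4 : (2*(n:ℚ)+1) ≠ 0 := by positivity
  have h5 : (2*(n:ℚ)+3) ≠ 0 := by positivity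
  field_simp
  ring

private lemma diamond (k j : ℕ) :
    AA k * BB (j+2) =
      RH (k+j+1) * (AA k * BB (j+1)) + RH (k+j+1) * (HH (k+j+1) (k+1) - HH (k+j+1) k) := by
  unfold HH RH
  rw [show k+j+1-(k+1) = j by omega, show k+j+1-k = j+1 by omega]
  rw [show j+2 = (j+1)+1 from rfl, Bsucc (j+1), Bsucc j, Csucc j, BCat j, Asucc k]
  have h1 : ((j:ℚ)+1) ≠ 0 := by positivity
  have h2 : ((j:ℚ)+2) ≠ 0 := by positivity
  have h3 : ((k:ℚ)+1) ≠ 0 := by positivity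
  have h4 : (2*(k:ℚ)+5) ≠ 0 := by positivity
  have h5 : ((k:ℚ)+(j:ℚ)+2) ≠ 0 := by positivity
  have h6 : ((k:ℚ)+(j:ℚ)+3) ≠ 0 := by positivity
  have h7 : (2*((k:ℚ)+(j:ℚ)+1)+5) ≠ 0 := by positivity
  push_cast
  field_simp
  ring

private lemma main (n : ℕ) : ∑ k ∈ Finset.range (n+1), AA k * BB (n-k) = DD n := by
  induction n with
  | zero => norm_num [AA, BB, DD, Nat.factorial]
  | succ n ih =>
    rw [Finset.sum_range_succ, Finset.sum_range_succ,
      show n+1-n = 1 by omega, Nat.sub_self]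
    have hsum : ∑ k ∈ Finset.range n, AA k * BB (n+1-k)
        = ∑ k ∈ Finset.range n, (RH n * (AA k * BB (n-k)) + RH n * (HH n (k+1) - HH n k)) := by
      refine Finset.sum_congr rfl fun k hk => ?_
      have hk' := Finset.mem_range.mp hk
      obtain ⟨j, hj⟩ : ∃ j, n = k + j + 1 := ⟨n - k - 1, by omega⟩
      subst hj
      rw [show k+j+1+1-k = j+2 by omega, show k+j+1-k = j+1 by omega]
      exact diamond k j
    rw [Finset.sum_range_succ] at ih
    rw [hsum, Finset.sum_add_distrib, ← Finset.mul_sum, ← Finset.mul_sum,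
      Finset.sum_range_sub (HH n), hzero, Nat.sub_self] at *
    rw [Dsucc, B0, B1]
    have hb := boundary n
    have hih : ∑ k ∈ Finset.range n, AA k * BB (n-k) = DD n - AA n * BB 0 := by
      rw [← ih]; ring
    rw [hih, B0]
    linear_combination hb

private lemma term (k j : ℕ) :
    ((2 * (k+j+1) + 1).factorial : ℚ) / (16 ^ ((k+j+1) - 1) * ((((k+j+1) : ℕ).factorial : ℚ)) ^ 2) *
        (((2 * (k+1) - 2).factorial : ℚ) * ((2 * (k+1) - 1).factorial : ℚ) * ((k+1).factorial : ℚ) *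
          ((2 * (k+j+1) - 2 * (k+1)).factorial : ℚ)) /
        (((2 * (k+1) + 1).factorial : ℚ) * ((((k+1) - 1).factorial : ℚ)) ^ 3 *
          ((((k+j+1) - (k+1)).factorial : ℚ)) ^ 2)
      = AA k * BB j / DD (k+j) := by
  rw [show 2*(k+j+1)+1 = 2*(k+j)+3 by ring, show (k+j+1)-1 = k+j by omega,
    show 2*(k+1)-2 = 2*k by omega, show 2*(k+1)-1 = 2*k+1 by omega,
    show 2*(k+j+1)-2*(k+1) = 2*j by omega, show 2*(k+1)+1 = 2*k+3 by ring,
    show (k+1)-1 = k by omega, show (k+j+1)-(k+1) = j by omega]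
  unfold AA BB DD
  rw [show 2*k+3 = (2*k+1)+1+1 by ring]
  simp only [Nat.factorial_succ]
  have h1 := factQpos k
  have h2 := factQpos j
  have h3 := factQpos (2*k)
  have h4 := factQpos (2*k+1)
  have h5 := factQpos (2*(k+j)+3)
  have h6 := factQpos (k+j+1)
  have h7 : (0:ℚ) < 16 ^ (k+j) := by positivity
  push_cast
  field_simp
  ring

/-- For every integer `u ≥ 1`,
`∑_{m=1}^{u} (2u+1)!/(16^{u-1}(u!)²) · (2m-2)!(2m-1)!m!(2u-2m)! / ((2m+1)!((m-1)!)³((u-m)!)²) = 1`. -/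
theorem stmt1 (u : ℕ) (hu : 1 ≤ u) :
    ∑ m ∈ Finset.Icc 1 u,
      ((2 * u + 1).factorial : ℚ) / (16 ^ (u - 1) * ((u.factorial : ℚ)) ^ 2) *
        (((2 * m - 2).factorial : ℚ) * ((2 * m - 1).factorial : ℚ) * (m.factorial : ℚ) *
          ((2 * u - 2 * m).factorial : ℚ)) /
        (((2 * m + 1).factorial : ℚ) * (((m - 1).factorial : ℚ)) ^ 3 *
          (((u - m).factorial : ℚ)) ^ 2) = 1 := by
  have himg : Finset.Icc 1 u = Finset.image (· + 1) (Finset.range u) := by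
    ext m; simp only [Finset.mem_Icc, Finset.mem_range, Finset.mem_image]
    constructor
    · rintro ⟨h1, h2⟩; exact ⟨m-1, by omega, by omega⟩
    · rintro ⟨a, ha, rfl⟩; omega
  rw [himg, Finset.sum_image (by intros a _ b _ h; have h' : a + 1 = b + 1 := h; omega)]
  have key : ∑ i ∈ Finset.range u,
      ((2 * u + 1).factorial : ℚ) / (16 ^ (u - 1) * ((u.factorial : ℚ)) ^ 2) *
        (((2 * (i+1) - 2).factorial : ℚ) * ((2 * (i+1) - 1).factorial : ℚ) * ((i+1).factorial : ℚ) *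
          ((2 * u - 2 * (i+1)).factorial : ℚ)) /
        (((2 * (i+1) + 1).factorial : ℚ) * ((((i+1) - 1).factorial : ℚ)) ^ 3 *
          (((u - (i+1)).factorial : ℚ)) ^ 2)
      = ∑ i ∈ Finset.range u, AA i * BB ((u-1)-i) / DD (u-1) := by
    refine Finset.sum_congr rfl fun i hi => ?_
    have hi' := Finset.mem_range.mp hi
    obtain ⟨j, hj⟩ : ∃ j, u = i + j + 1 := ⟨u - i - 1, by omega⟩
    subst hj
    rw [show i+j+1-1-i = j by omega]
    exact term i j
  rw [key, ← Finset.sum_div]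
  obtain ⟨n, rfl⟩ : ∃ n, u = n+1 := ⟨u-1, by omega⟩
  rw [show n+1-1 = n by omega, main n, div_self (ne_of_gt (Dpos n))]
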